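/- Let A₀, A₁ ∈ GL_n(ℤ) with A₁·A₀⁻¹ ∈ SL_n(ℤ). Then there exists a matrix Ã ∈ GL_n(ℤ[T]) (an invertible matrix over the polynomial ring ℤ[T]) such that evaluating T at 0 gives A₀ and evaluating T at 1 gives A₁. -/

import Mathlib

open Polynomial

open Matrix Matrix.TransvectionStruct Sum

lemma natAbs_emod_lt' (a : ℤ) {b : ℤ} (hb : b ≠ 0) : (a % b).natAbs < b.natAbs := by
  rcases lt_or_gt_of_ne hb with h | h
  · rw [(Int.emod_neg a b).symm]
    have h1 := Int.emod_nonneg a (by omega : (-b) ≠ 0)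
    have h2 := Int.emod_lt_of_pos a (by omega : (0:ℤ) < -b)
    omega
  · have h1 := Int.emod_nonneg a hb
    have h2 := Int.emod_lt_of_pos a h
    omega

variable {r : ℕ}

lemma col_reduce (M : Matrix (Fin r ⊕ Unit) (Fin r ⊕ Unit) ℤ) (hM : M.det = 1) :
    ∃ L : List (TransvectionStruct (Fin r ⊕ Unit) ℤ),
      ∀ i, ((L.map toMatrix).prod * M) i (inr ()) = if i = inr () then 1 else 0 := by
  suffices H : ∀ N : ℕ, ∀ M : Matrix (Fin r ⊕ Unit) (Fin r ⊕ Unit) ℤ, M.det = 1 →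
      (∑ i, (M i (inr ())).natAbs) < N →
      ∃ L : List (TransvectionStruct (Fin r ⊕ Unit) ℤ),
        ∀ i, ((L.map toMatrix).prod * M) i (inr ()) = if i = inr () then 1 else 0 by
    exact H _ M hM (Nat.lt_succ_self _)
  intro N
  induction N with
  | zero => intro M hM h; omega
  | succ N IH =>
    intro M hM hlt
    have hbez : ∑ k, M.adjugate (inr ()) k * M k (inr ()) = 1 := by
      have h2 : (M.adjugate * M) (inr ()) (inr ()) =
          (M.det • (1 : Matrix (Fin r ⊕ Unit) (Fin r ⊕ Unit) ℤ)) (inr ()) (inr ()) := by rw [Matrix.adjugate_mul]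
      simpa [Matrix.mul_apply, hM, Matrix.one_apply] using h2
    by_cases hcase : ∃ i j, i ≠ j ∧ M i (inr ()) ≠ 0 ∧ M j (inr ()) ≠ 0
    · -- Euclidean step
      obtain ⟨i, j, hij, hvi, hvj⟩ := hcase
      obtain ⟨j₀, hj₀mem, hj₀min⟩ := Finset.exists_min_image
        (Finset.univ.filter fun i => M i (inr ()) ≠ 0) (fun i => (M i (inr ())).natAbs)
        ⟨i, by simp [hvi]⟩
      have hvj₀ : M j₀ (inr ()) ≠ 0 := by simpa using hj₀mem
      obtain ⟨i₀, hvi₀, hne⟩ : ∃ i₀, M i₀ (inr ()) ≠ 0 ∧ i₀ ≠ j₀ := by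
        by_cases hi : i = j₀
        · exact ⟨j, hvj, fun hjj => hij (by rw [hi, hjj])⟩
        · exact ⟨i, hvi, hi⟩
      have happ : ∀ a, (transvection i₀ j₀ (-(M i₀ (inr ()) / M j₀ (inr ()))) * M) a (inr ())
          = if a = i₀ then M i₀ (inr ()) % M j₀ (inr ()) else M a (inr ()) := by
        intro a
        by_cases ha : a = i₀
        · subst ha
          rw [transvection_mul_apply_same, if_pos rfl, Int.emod_def]; ring
        · rw [transvection_mul_apply_of_ne _ _ _ _ ha, if_neg ha]
      have hkey : (M i₀ (inr ()) % M j₀ (inr ())).natAbs < (M i₀ (inr ())).natAbs := by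
        have h1 := natAbs_emod_lt' (M i₀ (inr ())) hvj₀
        have h2 := hj₀min i₀ (by simp [hvi₀])
        omega
      have hmeas : (∑ a, ((transvection i₀ j₀ (-(M i₀ (inr ()) / M j₀ (inr ()))) * M)
          a (inr ())).natAbs) < ∑ a, (M a (inr ())).natAbs := by
        refine Finset.sum_lt_sum (fun a _ => ?_) ⟨i₀, Finset.mem_univ _, ?_⟩
        · rw [happ a]
          by_cases ha : a = i₀
          · subst ha; rw [if_pos rfl]; omega
          · rw [if_neg ha]
        · rw [happ i₀, if_pos rfl]; omega
      obtain ⟨L, hL⟩ := IH (transvection i₀ j₀ (-(M i₀ (inr ()) / M j₀ (inr ()))) * M)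
        (by rw [det_mul, det_transvection_of_ne _ _ hne, hM, one_mul]) (by omega)
      refine ⟨L ++ [⟨i₀, j₀, hne, -(M i₀ (inr ()) / M j₀ (inr ()))⟩], fun a => ?_⟩
      rw [List.map_append, List.prod_append]
      simpa [toMatrix_mk, Matrix.mul_assoc] using hL a
    · -- at most one nonzero entry
      push_neg at hcase
      obtain ⟨k, hvk⟩ : ∃ k, M k (inr ()) ≠ 0 := by
        by_contra hall
        push_neg at hall
        simp only [hall, mul_zero, Finset.sum_const_zero] at hbez
        exact one_ne_zero hbez.symm
      have hzero : ∀ a, a ≠ k → M a (inr ()) = 0 := by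
        intro a ha
        by_contra hcon
        exact hvk (hcase a k ha hcon)
      have hunit : M k (inr ()) = 1 ∨ M k (inr ()) = -1 := by
        have hsum : M.adjugate (inr ()) k * M k (inr ()) = 1 := by
          rw [Finset.sum_eq_single_of_mem k (Finset.mem_univ k)
            (fun b _ hb => by rw [hzero b hb, mul_zero])] at hbez
          exact hbez
        exact Int.isUnit_iff.mp (IsUnit.of_mul_eq_one _ ((mul_comm _ _).trans hsum))
      rcases eq_or_ne k (inr ()) with hk | hk
      · subst hk
        rcases hunit with h1 | h1
        · refine ⟨[], fun a => ?_⟩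
          simp only [List.map_nil, List.prod_nil, Matrix.one_mul]
          by_cases ha : a = inr ()
          · subst ha; rw [if_pos rfl]; exact h1
          · rw [if_neg ha]; exact hzero a ha
        · rcases Nat.eq_zero_or_pos r with hr | hr
          · exfalso
            subst hr
            have hd : M.det = M (inr ()) (inr ()) :=
              Matrix.det_eq_elem_of_card_eq_one (by simp) (inr ())
            rw [hM, h1] at hd; omega
          · have hjne : (inl ⟨0, hr⟩ : Fin r ⊕ Unit) ≠ inr () := by simp
            refine ⟨[⟨inl ⟨0, hr⟩, inr (), hjne, 1⟩, ⟨inr (), inl ⟨0, hr⟩, Ne.symm hjne, -2⟩,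
              ⟨inl ⟨0, hr⟩, inr (), hjne, 1⟩], fun a => ?_⟩
            have hvj : M (inl ⟨0, hr⟩) (inr ()) = 0 := hzero _ hjne
            simp only [List.map_cons, List.map_nil, List.prod_cons, List.prod_nil,
              Matrix.mul_one, toMatrix_mk, Matrix.mul_assoc]
            set M1 := transvection (inl ⟨0, hr⟩) (inr ()) 1 * M with hM1
            have e1j : M1 (inl ⟨0, hr⟩) (inr ()) = -1 := by
              rw [hM1, transvection_mul_apply_same, hvj, h1]; ring
            have e1r : M1 (inr ()) (inr ()) = -1 := by
              rw [hM1, transvection_mul_apply_of_ne _ _ _ _ (Ne.symm hjne)]; exact h1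
            have e1o : ∀ a, a ≠ inl ⟨0, hr⟩ → a ≠ inr () → M1 a (inr ()) = 0 := by
              intro a haj har
              rw [hM1, transvection_mul_apply_of_ne _ _ _ _ haj]; exact hzero a har
            set M2 := transvection (inr ()) (inl ⟨0, hr⟩) (-2) * M1 with hM2
            have e2r : M2 (inr ()) (inr ()) = 1 := by
              rw [hM2, transvection_mul_apply_same, e1r, e1j]; ring
            have e2j : M2 (inl ⟨0, hr⟩) (inr ()) = -1 := by
              rw [hM2, transvection_mul_apply_of_ne _ _ _ _ hjne]; exact e1j
            have e2o : ∀ a, a ≠ inl ⟨0, hr⟩ → a ≠ inr () → M2 a (inr ()) = 0 := by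
              intro a haj har
              rw [hM2, transvection_mul_apply_of_ne _ _ _ _ har]; exact e1o a haj har
            by_cases ha : a = inl ⟨0, hr⟩
            · subst ha
              rw [transvection_mul_apply_same, e2j, e2r, if_neg hjne]; ring
            · by_cases har : a = inr ()
              · subst har
                rw [transvection_mul_apply_of_ne _ _ _ _ (Ne.symm hjne), e2r, if_pos rfl]
              · rw [transvection_mul_apply_of_ne _ _ _ _ ha, e2o a ha har, if_neg har]
      · -- k ≠ inr () : two transvections
        have hvr : M (inr ()) (inr ()) = 0 := hzero _ (Ne.symm hk)
        have hss : M k (inr ()) * M k (inr ()) = 1 := by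
          rcases hunit with h | h <;> rw [h] <;> ring
        refine ⟨[⟨k, inr (), hk, -(M k (inr ()))⟩, ⟨inr (), k, Ne.symm hk, M k (inr ())⟩],
          fun a => ?_⟩
        simp only [List.map_cons, List.map_nil, List.prod_cons, List.prod_nil,
          Matrix.mul_one, toMatrix_mk, Matrix.mul_assoc]
        set M1 := transvection (inr ()) k (M k (inr ())) * M with hM1
        have e1r : M1 (inr ()) (inr ()) = 1 := by
          rw [hM1, transvection_mul_apply_same, hvr, zero_add]; exact hss
        have e1k : M1 k (inr ()) = M k (inr ()) := by
          rw [hM1, transvection_mul_apply_of_ne _ _ _ _ hk]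
        have e1o : ∀ a, a ≠ inr () → a ≠ k → M1 a (inr ()) = 0 := by
          intro a har hak
          rw [hM1, transvection_mul_apply_of_ne _ _ _ _ har]; exact hzero a hak
        by_cases hak : a = k
        · subst hak
          rw [transvection_mul_apply_same, e1k, e1r, if_neg hk]; ring
        · by_cases har : a = inr ()
          · subst har
            rw [transvection_mul_apply_of_ne _ _ _ _ (Ne.symm hk), e1r, if_pos rfl]
          · rw [transvection_mul_apply_of_ne _ _ _ _ hak, e1o a har hak, if_neg har]



lemma std_mul_sum (c : Fin r → ℤ) (a : Fin r) (l : List (Fin r)) :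
    (Matrix.single (inr ()) (inl a) (c a) : Matrix (Fin r ⊕ Unit) (Fin r ⊕ Unit) ℤ) *
      ((l.map fun i => Matrix.single (inr ()) (inl i) (c i) :
        List (Matrix (Fin r ⊕ Unit) (Fin r ⊕ Unit) ℤ))).sum = 0 := by
  induction l with
  | nil => simp
  | cons b l ihb =>
    simp only [List.map_cons, List.sum_cons, mul_add, ihb, add_zero]
    rw [Matrix.single_mul_single_of_ne (h := (by simp : (inl a : Fin r ⊕ Unit) ≠ inr ()))]

-- product of row transvections with common row index is 1 + sum of stdBasisMatrix
lemma prod_transvec_list (c : Fin r → ℤ) (l : List (Fin r)) :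
    (l.map fun i => transvection (inr ()) (inl i) (c i) :
      List (Matrix (Fin r ⊕ Unit) (Fin r ⊕ Unit) ℤ)).prod
    = 1 + (l.map fun i => Matrix.single (inr ()) (inl i) (c i)).sum := by
  induction l with
  | nil => simp
  | cons a l ih =>
    simp only [List.map_cons, List.prod_cons, List.sum_cons]
    rw [ih, transvection, add_mul, one_mul, mul_add, mul_one]
    rw [std_mul_sum]; abel

lemma det_transvec_prod {n : Type*} [DecidableEq n] [Fintype n]
    (L : List (TransvectionStruct n ℤ)) : ((L.map toMatrix).prod).det = 1 := by
  induction L with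
  | nil => simp
  | cons t L ih => simp [det_mul, ih]


lemma gen_step
    (IH : ∀ B : Matrix (Fin r) (Fin r) ℤ, B.det = 1 →
      ∃ L₀ : List (TransvectionStruct (Fin r) ℤ), (L₀.map toMatrix).prod = B)
    (M : Matrix (Fin r ⊕ Unit) (Fin r ⊕ Unit) ℤ) (hM : M.det = 1) :
    ∃ L : List (TransvectionStruct (Fin r ⊕ Unit) ℤ), (L.map toMatrix).prod = M := by
  obtain ⟨L₁, hcol⟩ := col_reduce M hM
  set N := (L₁.map toMatrix).prod * M with hN
  have hNdet : N.det = 1 := by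
    rw [hN, det_mul, det_transvec_prod, hM, one_mul]
  set c : Fin r → ℤ := fun i => -N (inr ()) (inl i) with hc
  set L₂ : List (TransvectionStruct (Fin r ⊕ Unit) ℤ) :=
    List.ofFn (fun i => ⟨inr (), inl i, by simp, c i⟩) with hL₂
  have hL₂map : L₂.map toMatrix = List.ofFn fun i => transvection (inr ()) (inl i) (c i) := by
    rw [hL₂, List.map_ofFn]; rfl
  have hprod2 : (L₂.map toMatrix).prod
      = 1 + ∑ i, Matrix.single (inr ()) (inl i) (c i) := by
    rw [hL₂map, List.ofFn_eq_map, prod_transvec_list, ← List.ofFn_eq_map, List.sum_ofFn]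
  have hterm : ∀ (i : Fin r) (a b : Fin r ⊕ Unit),
      (N * (Matrix.single (inr ()) (inl i) (c i) :
        Matrix (Fin r ⊕ Unit) (Fin r ⊕ Unit) ℤ)) a b
      = if b = inl i ∧ a = inr () then c i else 0 := by
    intro i a b
    rcases eq_or_ne b (inl i) with hb | hb
    · subst hb
      rw [Matrix.mul_single_apply_same, hcol a]
      by_cases ha : a = inr () <;> simp [ha]
    · rw [Matrix.mul_single_apply_of_ne (hbj := hb), if_neg]
      tauto
  have hblock : N * (L₂.map toMatrix).prod = fromBlocks (Matrix.toBlocks₁₁ N) 0 0 1 := by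
    rw [hprod2, mul_add, mul_one, Matrix.mul_sum]
    ext a b
    rcases a with a | ⟨⟩ <;> rcases b with b | ⟨⟩
    · simp only [Matrix.add_apply, Matrix.sum_apply, hterm, Matrix.fromBlocks_apply₁₁]
      simp [Matrix.toBlocks₁₁]
    · simp only [Matrix.add_apply, Matrix.sum_apply, hterm, Matrix.fromBlocks_apply₁₂,
        Matrix.zero_apply]
      simpa using hcol (inl a)
    · simp only [Matrix.add_apply, Matrix.sum_apply, hterm, Matrix.fromBlocks_apply₂₁,
        Matrix.zero_apply]
      simp only [Sum.inl.injEq, Sum.inr.injEq, and_true]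
      rw [Finset.sum_ite_eq Finset.univ b (fun i => c i)]
      simp only [Finset.mem_univ, if_true, hc]
      ring
    · simp only [Matrix.add_apply, Matrix.sum_apply, hterm, Matrix.fromBlocks_apply₂₂,
        Matrix.one_apply_eq]
      have h2 := hcol (inr ())
      rw [if_pos rfl] at h2
      simp [h2]
  have hBdet : (Matrix.toBlocks₁₁ N).det = 1 := by
    have h1 : (N * (L₂.map toMatrix).prod).det = 1 := by
      rw [det_mul, hNdet, det_transvec_prod, one_mul]
    rw [hblock] at h1
    rw [Matrix.det_fromBlocks_zero₂₁] at h1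
    simpa using h1
  obtain ⟨L₀, hL₀⟩ := IH _ hBdet
  have hS : ((L₀.map (sumInl Unit)).map toMatrix).prod = N * (L₂.map toMatrix).prod := by
    have h3 := sumInl_toMatrix_prod_mul (p := Unit) (1 : Matrix (Fin r) (Fin r) ℤ) L₀
      (1 : Matrix Unit Unit ℤ)
    rw [Matrix.fromBlocks_one, Matrix.mul_one, Matrix.mul_one] at h3
    rw [hblock, List.map_map, h3, hL₀]
  refine ⟨L₁.reverse.map TransvectionStruct.inv ++
    (L₀.map (sumInl Unit) ++ L₂.reverse.map TransvectionStruct.inv), ?_⟩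
  rw [List.map_append, List.prod_append, List.map_append, List.prod_append]
  rw [hS, hN]
  have h1 : ((L₁.reverse.map TransvectionStruct.inv).map toMatrix).prod
      * (L₁.map toMatrix).prod = 1 := by
    have := reverse_inv_prod_mul_prod L₁
    rw [← List.map_map] at this
    exact this
  have h2 : ((L₂.map toMatrix).prod) *
      ((L₂.reverse.map TransvectionStruct.inv).map toMatrix).prod = 1 := by
    have := prod_mul_reverse_inv_prod L₂
    rw [← List.map_map] at this
    exact this
  calc ((L₁.reverse.map TransvectionStruct.inv).map toMatrix).prod *
        ((L₁.map toMatrix).prod * M * (L₂.map toMatrix).prod *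
          ((L₂.reverse.map TransvectionStruct.inv).map toMatrix).prod)
      = (((L₁.reverse.map TransvectionStruct.inv).map toMatrix).prod *
          (L₁.map toMatrix).prod) * M * ((L₂.map toMatrix).prod *
          ((L₂.reverse.map TransvectionStruct.inv).map toMatrix).prod) := by
        simp only [Matrix.mul_assoc]
    _ = M := by rw [h1, h2, Matrix.one_mul, Matrix.mul_one]


lemma exists_transvec_prod (n : Type) [Fintype n] [DecidableEq n] :
    ∀ (M : Matrix n n ℤ), M.det = 1 →
    ∃ L : List (TransvectionStruct n ℤ), (L.map toMatrix).prod = M := by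
  induction' hn : Fintype.card n with r IH generalizing n
  · intro M hM
    haveI := Fintype.card_eq_zero_iff.mp hn
    exact ⟨[], by ext i j; exact (IsEmpty.false i).elim⟩
  · intro M hM
    have e : n ≃ Fin r ⊕ Unit := Fintype.equivOfCardEq (by simp [hn])
    have hM' : (Matrix.reindexAlgEquiv ℤ _ e M).det = 1 := by
      rw [Matrix.reindexAlgEquiv_apply, Matrix.det_reindex_self, hM]
    obtain ⟨L', hL'⟩ := gen_step
      (fun B hB => IH (Fin r) (by simp) B hB) (Matrix.reindexAlgEquiv ℤ _ e M) hM'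
    refine ⟨L'.map (reindexEquiv e.symm), ?_⟩
    rw [List.map_map, toMatrix_reindexEquiv_prod, hL']
    simp [Matrix.reindexAlgEquiv_apply, Matrix.submatrix_submatrix]

lemma transvection_map {n : Type*} [Fintype n] [DecidableEq n]
    {R S : Type*} [CommRing R] [CommRing S] (f : R →+* S) (i j : n) (c : R) :
    (transvection i j c).map f = transvection i j (f c) := by
  ext a b
  simp [transvection, Matrix.map_apply, Matrix.add_apply, Matrix.single, Matrix.of_apply,
    Matrix.one_apply, apply_ite f]



/-- If `A₀, A₁ ∈ GL_n(ℤ)` with `A₁ A₀⁻¹ ∈ SL_n(ℤ)`, then there is a matrix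
`Atilde ∈ GL_n(ℤ[T])` with `Atilde(0) = A₀` and `Atilde(1) = A₁`. -/
theorem stmt_15 (n : ℕ) (A₀ A₁ : (Matrix (Fin n) (Fin n) ℤ)ˣ)
    (h : ((A₁ * A₀⁻¹ : (Matrix (Fin n) (Fin n) ℤ)ˣ) :
      Matrix (Fin n) (Fin n) ℤ).det = 1) :
    ∃ Atilde : (Matrix (Fin n) (Fin n) ℤ[X])ˣ,
      Units.map ((Polynomial.evalRingHom (0 : ℤ)).mapMatrix.toMonoidHom) Atilde = A₀ ∧
      Units.map ((Polynomial.evalRingHom (1 : ℤ)).mapMatrix.toMonoidHom) Atilde = A₁ := by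

  have hB : ((A₁ : Matrix (Fin n) (Fin n) ℤ) * ((A₀⁻¹ : _ˣ) : Matrix (Fin n) (Fin n) ℤ)).det
      = 1 := by simpa using h
  obtain ⟨L, hL⟩ := exists_transvec_prod (Fin n) _ hB
  set LX : List (TransvectionStruct (Fin n) ℤ[X]) :=
    L.map (fun t => ⟨t.i, t.j, t.hij, Polynomial.C t.c * Polynomial.X⟩) with hLX
  set P : Matrix (Fin n) (Fin n) ℤ[X] := (LX.map toMatrix).prod with hP
  set Pinv : Matrix (Fin n) (Fin n) ℤ[X] :=
    ((LX.reverse.map TransvectionStruct.inv).map toMatrix).prod with hPinv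
  have hPP : P * Pinv = 1 := by
    have := prod_mul_reverse_inv_prod LX
    rw [← List.map_map] at this
    exact this
  have hPP' : Pinv * P = 1 := by
    have := reverse_inv_prod_mul_prod LX
    rw [← List.map_map] at this
    exact this
  have hmapmul : ∀ (M N : Matrix (Fin n) (Fin n) ℤ),
      (M.map (Polynomial.C : ℤ →+* ℤ[X])) * (N.map Polynomial.C) = (M * N).map Polynomial.C := by
    intro M N
    rw [Matrix.map_mul]
  refine ⟨⟨P * ((A₀ : Matrix (Fin n) (Fin n) ℤ).map Polynomial.C),
    ((↑A₀⁻¹ : Matrix (Fin n) (Fin n) ℤ).map Polynomial.C) * Pinv, ?_, ?_⟩, ?_, ?_⟩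
  · calc P * ((A₀ : Matrix (Fin n) (Fin n) ℤ).map Polynomial.C) *
        (((↑A₀⁻¹ : Matrix (Fin n) (Fin n) ℤ).map Polynomial.C) * Pinv)
        = P * (((A₀ : Matrix (Fin n) (Fin n) ℤ).map Polynomial.C) *
          ((↑A₀⁻¹ : Matrix (Fin n) (Fin n) ℤ).map Polynomial.C)) * Pinv := by
          simp only [Matrix.mul_assoc]
      _ = 1 := by
          rw [hmapmul, Units.mul_inv, Matrix.map_one _ (map_zero _) (map_one _), Matrix.mul_one,
            hPP]
  · calc ((↑A₀⁻¹ : Matrix (Fin n) (Fin n) ℤ).map Polynomial.C) * Pinv *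
        (P * ((A₀ : Matrix (Fin n) (Fin n) ℤ).map Polynomial.C))
        = ((↑A₀⁻¹ : Matrix (Fin n) (Fin n) ℤ).map Polynomial.C) * (Pinv * P) *
          ((A₀ : Matrix (Fin n) (Fin n) ℤ).map Polynomial.C) := by
          simp only [Matrix.mul_assoc]
      _ = 1 := by
          rw [hPP', Matrix.mul_one, hmapmul, Units.inv_mul,
            Matrix.map_one _ (map_zero _) (map_one _)]
  · -- evaluation at 0
    apply Units.ext
    show (Polynomial.evalRingHom (0 : ℤ)).mapMatrix (P * _) = (A₀ : Matrix (Fin n) (Fin n) ℤ)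
    rw [_root_.map_mul]
    have h1 : (Polynomial.evalRingHom (0 : ℤ)).mapMatrix P = 1 := by
      rw [hP, hLX, map_list_prod, List.map_map, List.map_map]
      apply List.prod_eq_one
      intro x hx
      obtain ⟨t, -, rfl⟩ := List.mem_map.mp hx
      simp only [Function.comp_apply, RingHom.mapMatrix_apply, toMatrix_mk, transvection_map]
      simp [transvection_zero]
    have h2 : (Polynomial.evalRingHom (0 : ℤ)).mapMatrix
        (((A₀ : Matrix (Fin n) (Fin n) ℤ)).map Polynomial.C) = (A₀ : Matrix (Fin n) (Fin n) ℤ) := by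
      rw [RingHom.mapMatrix_apply, Matrix.map_map]
      convert Matrix.map_id _
      ext x : 1
      simp
    rw [h1, h2, Matrix.one_mul]
  · -- evaluation at 1
    apply Units.ext
    show (Polynomial.evalRingHom (1 : ℤ)).mapMatrix (P * _) = (A₁ : Matrix (Fin n) (Fin n) ℤ)
    rw [_root_.map_mul]
    have h1 : (Polynomial.evalRingHom (1 : ℤ)).mapMatrix P
        = (A₁ : Matrix (Fin n) (Fin n) ℤ) * ((A₀⁻¹ : _ˣ) : Matrix (Fin n) (Fin n) ℤ) := by
      rw [hP, hLX, map_list_prod, List.map_map, List.map_map, ← hL]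
      congr 1
      apply List.map_congr_left
      intro t _
      simp only [Function.comp_apply, RingHom.mapMatrix_apply, toMatrix_mk, transvection_map]
      cases t
      simp [toMatrix_mk]
    have h2 : (Polynomial.evalRingHom (1 : ℤ)).mapMatrix
        (((A₀ : Matrix (Fin n) (Fin n) ℤ)).map Polynomial.C) = (A₀ : Matrix (Fin n) (Fin n) ℤ) := by
      rw [RingHom.mapMatrix_apply, Matrix.map_map]
      convert Matrix.map_id _
      ext x : 1
      simp
    rw [h1, h2, Matrix.mul_assoc]
    have : ((A₀⁻¹ : _ˣ) : Matrix (Fin n) (Fin n) ℤ) * (A₀ : Matrix (Fin n) (Fin n) ℤ) = 1 :=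
      Units.inv_mul _
    rw [this, Matrix.mul_one]
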